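/- Let Γ be a countable group acting freely on measure spaces (X, μ) and (X', μ') by measurable, measure-preserving bijections, with measurable strict fundamental domains F, F' of finite measure and measurable retracts χ, χ'. Let Λ be a group acting on the right on X and on X' by measurable, measure-preserving bijections, each action commuting with the Γ-action. Let (T, ν) and (T', ν') be finite measure spaces. Form Y = (X × T) ⊔ (X' × T') with the sum of the product measures, with Γ acting by γ • (x,t) = (γ • x, t) on each piece and Λ acting by (x,t) · λ = (x · λ, t) on each piece. Then (F × T) ⊔ (F' × T') is a measurable strict fundamental domain for the Γ-action on Y whose retract sends (x,t) in the first piece to χ(x) and (x',t') in the second piece to χ'(x'), and for every bounded Γ-invariant c : Γ^{n+1} → ℝ the transfer cochains satisfy T_Y c(λ₀,…,λ_n) = ν(T) · T_X c(λ₀,…,λ_n) + ν'(T') · T_{X'} c(λ₀,…,λ_n) for all λ₀,…,λ_n ∈ Λ. -/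

import Mathlib

open MeasureTheory

lemma stmt12_restrict_prod {X T : Type*} [MeasurableSpace X] [MeasurableSpace T]
    (μ : Measure X) (ν : Measure T) [SFinite ν] {F : Set X} (hF : MeasurableSet F) :
    (μ.prod ν).restrict (F ×ˢ (Set.univ : Set T)) = (μ.restrict F).prod ν := by
  ext E hE
  rw [Measure.restrict_apply hE, Measure.prod_apply (hE.inter (hF.prod MeasurableSet.univ)),
    Measure.prod_apply hE, ← lintegral_indicator hF]
  congr 1
  ext x
  by_cases hx : x ∈ F
  · simp only [Set.indicator_of_mem hx]
    congr 1
    ext t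
    simp [hx]
  · simp only [Set.indicator_of_notMem hx]
    have : Prod.mk x ⁻¹' (E ∩ F ×ˢ (Set.univ : Set T)) = ∅ := by
      ext t; simp [hx]
    simp [this]

lemma stmt12_aux {X T : Type*} [MeasurableSpace X] [MeasurableSpace T]
    (μ : Measure X) (ν : Measure T) [IsFiniteMeasure ν] {F : Set X}
    (hFmeas : MeasurableSet F) (hFfin : μ F < ⊤) (G : X → ℝ) (hG : Measurable G)
    (C : ℝ) (hC : ∀ x, |G x| ≤ C) :
    ∫ p in F ×ˢ (Set.univ : Set T), G p.1 ∂(μ.prod ν)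
      = (ν Set.univ).toReal * ∫ x in F, G x ∂μ := by
  rw [stmt12_restrict_prod μ ν hFmeas]
  haveI : IsFiniteMeasure (μ.restrict F) := ⟨by rwa [Measure.restrict_apply_univ]⟩
  have hInt : Integrable (fun p : X × T => G p.1) ((μ.restrict F).prod ν) := by
    refine Integrable.mono' (integrable_const C) ?_ ?_
    · exact (hG.comp measurable_fst).aestronglyMeasurable
    · exact Filter.Eventually.of_forall fun p => by simpa using hC p.1
  rw [integral_prod _ hInt]
  simp only [integral_const, smul_eq_mul, Measure.restrict_univ]
  rw [integral_const_mul]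
  rfl

/-- for two couplings `(Γ, X, Λ)`, `(Γ, X', Λ)` and finite measure spaces
`T, T'` with trivial actions, the disjoint union `Y = (X × T) ⊔ (X' × T')` is again a
coupling with fundamental domain `(F × T) ⊔ (F' × T')` and retract induced by `χ, χ'`,
and the transfer cochains satisfy `T_Y c = ν(T) · T_X c + ν'(T') · T_{X'} c`. -/
theorem stmt12 {Γ Λ X X' T T' : Type*} [Group Γ] [Countable Γ]
    [MeasurableSpace Γ] [MeasurableSingletonClass Γ]
    [Group Λ] [MulAction Γ X] [MulAction Γ X']
    [MeasurableSpace X] [MeasurableSpace X'] [MeasurableSpace T] [MeasurableSpace T']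
    (μ : Measure X) (μ' : Measure X') (ν : Measure T) (ν' : Measure T')
    [IsFiniteMeasure ν] [IsFiniteMeasure ν']
    (hΓmeas : ∀ γ : Γ, Measurable fun x : X => γ • x)
    (hΓmeas' : ∀ γ : Γ, Measurable fun x : X' => γ • x)
    (hΓpres : ∀ γ : Γ, MeasurePreserving (fun x : X => γ • x) μ μ)
    (hΓpres' : ∀ γ : Γ, MeasurePreserving (fun x : X' => γ • x) μ' μ')
    (hfree : ∀ (γ : Γ) (x : X), γ • x = x → γ = 1)
    (hfree' : ∀ (γ : Γ) (x : X'), γ • x = x → γ = 1)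
    (F : Set X) (F' : Set X') (hFmeas : MeasurableSet F) (hF'meas : MeasurableSet F')
    (hFfin : μ F < ⊤) (hF'fin : μ' F' < ⊤)
    (hF : ∀ x : X, ∃! y : X, y ∈ F ∧ ∃ γ : Γ, γ • x = y)
    (hF' : ∀ x : X', ∃! y : X', y ∈ F' ∧ ∃ γ : Γ, γ • x = y)
    (χ : X → Γ) (χ' : X' → Γ) (hχmeas : Measurable χ) (hχ'meas : Measurable χ')
    (hχeq : ∀ (γ : Γ) (x : X), χ (γ • x) = γ * χ x)
    (hχ'eq : ∀ (γ : Γ) (x : X'), χ' (γ • x) = γ * χ' x)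
    (hχF : ∀ y ∈ F, χ y = 1) (hχ'F : ∀ y ∈ F', χ' y = 1)
    (ρ : X → Λ → X) (ρ' : X' → Λ → X')
    (hρ_one : ∀ x : X, ρ x 1 = x)
    (hρ_mul : ∀ (x : X) (l m : Λ), ρ x (l * m) = ρ (ρ x l) m)
    (hρ'_one : ∀ x : X', ρ' x 1 = x)
    (hρ'_mul : ∀ (x : X') (l m : Λ), ρ' x (l * m) = ρ' (ρ' x l) m)
    (hρmeas : ∀ l : Λ, Measurable fun x : X => ρ x l)
    (hρ'meas : ∀ l : Λ, Measurable fun x : X' => ρ' x l)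
    (hρpres : ∀ l : Λ, MeasurePreserving (fun x : X => ρ x l) μ μ)
    (hρ'pres : ∀ l : Λ, MeasurePreserving (fun x : X' => ρ' x l) μ' μ')
    (hcomm : ∀ (γ : Γ) (x : X) (l : Λ), ρ (γ • x) l = γ • ρ x l)
    (hcomm' : ∀ (γ : Γ) (x : X') (l : Λ), ρ' (γ • x) l = γ • ρ' x l)
    (n : ℕ) (c : (Fin (n + 1) → Γ) → ℝ)
    (C : ℝ) (hc : ∀ f : Fin (n + 1) → Γ, |c f| ≤ C)
    (hcinv : ∀ (γ : Γ) (f : Fin (n + 1) → Γ), c (fun j => γ * f j) = c f) :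
    let Y := (X × T) ⊕ (X' × T')
    let σY : Γ → Y → Y := fun γ =>
      Sum.map (fun p => (γ • p.1, p.2)) (fun p => (γ • p.1, p.2))
    let ρY : Y → Λ → Y := fun y l =>
      Sum.map (fun p => (ρ p.1 l, p.2)) (fun p => (ρ' p.1 l, p.2)) y
    let χY : Y → Γ := Sum.elim (fun p => χ p.1) (fun p => χ' p.1)
    let FY : Set Y :=
      (Sum.inl '' (F ×ˢ (Set.univ : Set T))) ∪ (Sum.inr '' (F' ×ˢ (Set.univ : Set T')))
    let μY : Measure Y := (μ.prod ν).map Sum.inl + (μ'.prod ν').map Sum.inr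
    MeasurableSet FY ∧
    (∀ y : Y, ∃! z : Y, z ∈ FY ∧ ∃ γ : Γ, σY γ y = z) ∧
    (∀ (γ : Γ) (y : Y), χY (σY γ y) = γ * χY y) ∧
    (∀ z ∈ FY, χY z = 1) ∧
    (∀ f : Fin (n + 1) → Λ,
      ∫ y in FY, c (fun j => χY (ρY y (f j))) ∂μY =
        (ν Set.univ).toReal * ∫ x in F, c (fun j => χ (ρ x (f j))) ∂μ +
        (ν' Set.univ).toReal * ∫ x in F', c (fun j => χ' (ρ' x (f j))) ∂μ') := by
  intro Y σY ρY χY FY μY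
  have hinl : MeasurableEmbedding (Sum.inl : X × T → Y) :=
    ⟨Sum.inl_injective, measurable_inl, fun _ hs => hs.inl_image⟩
  have hinr : MeasurableEmbedding (Sum.inr : X' × T' → Y) :=
    ⟨Sum.inr_injective, measurable_inr, fun _ hs => measurableSet_inr_image.2 hs⟩
  have hFYl : (Sum.inl : X × T → Y) ⁻¹' FY = F ×ˢ Set.univ := by
    ext p; simp [FY]
  have hFYr : (Sum.inr : X' × T' → Y) ⁻¹' FY = F' ×ˢ Set.univ := by
    ext p; simp [FY]
  have hFYmeas : MeasurableSet FY := by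
    exact ((hFmeas.prod MeasurableSet.univ).inl_image).union
      (measurableSet_inr_image.2 (hF'meas.prod MeasurableSet.univ))
  refine ⟨hFYmeas, ?_, ?_, ?_, ?_⟩
  · -- fundamental domain
    rintro (⟨x, t⟩ | ⟨x, t⟩)
    · obtain ⟨y, ⟨hyF, γ, hγ⟩, huniq⟩ := hF x
      have hmem : Sum.inl (y, t) ∈ FY := Or.inl ⟨(y, t), ⟨hyF, trivial⟩, rfl⟩
      have hmap : σY γ (Sum.inl (x, t)) = Sum.inl (y, t) := by simp [σY, hγ]
      refine ⟨Sum.inl (y, t), ⟨hmem, γ, hmap⟩, ?_⟩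
      intro z' hz'
      obtain ⟨hzF, γ', hγ'⟩ := hz'
      match z', hzF, hγ' with
      | Sum.inl (z, s), hzF, hγ' =>
        have h12 : ((γ' • x, t) : X × T) = (z, s) := Sum.inl_injective hγ'
        have h1 : γ' • x = z := congrArg Prod.fst h12
        have h2 : t = s := congrArg Prod.snd h12
        have hzF' : z ∈ F := by
          rcases hzF with ⟨p, hp, hpe⟩ | ⟨p, hp, hpe⟩
          · have hpz : p = (z, s) := Sum.inl_injective hpe
            rw [hpz] at hp; exact hp.1
          · exact absurd hpe (by simp)
        have := huniq z ⟨hzF', γ', h1⟩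
        simp [this, h2]
      | Sum.inr (z, s), hzF, hγ' => simp [σY] at hγ'
    · obtain ⟨y, ⟨hyF, γ, hγ⟩, huniq⟩ := hF' x
      have hmem : Sum.inr (y, t) ∈ FY := Or.inr ⟨(y, t), ⟨hyF, trivial⟩, rfl⟩
      have hmap : σY γ (Sum.inr (x, t)) = Sum.inr (y, t) := by simp [σY, hγ]
      refine ⟨Sum.inr (y, t), ⟨hmem, γ, hmap⟩, ?_⟩
      intro z' hz'
      obtain ⟨hzF, γ', hγ'⟩ := hz'
      match z', hzF, hγ' with
      | Sum.inl (z, s), hzF, hγ' => simp [σY] at hγ'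
      | Sum.inr (z, s), hzF, hγ' =>
        have h12 : ((γ' • x, t) : X' × T') = (z, s) := Sum.inr_injective hγ'
        have h1 : γ' • x = z := congrArg Prod.fst h12
        have h2 : t = s := congrArg Prod.snd h12
        have hzF' : z ∈ F' := by
          rcases hzF with ⟨p, hp, hpe⟩ | ⟨p, hp, hpe⟩
          · exact absurd hpe (by simp)
          · have hpz : p = (z, s) := Sum.inr_injective hpe
            rw [hpz] at hp; exact hp.1
        have := huniq z ⟨hzF', γ', h1⟩
        simp [this, h2]
  · -- equivariance
    rintro γ (⟨x, t⟩ | ⟨x, t⟩) <;> simp [σY, χY, hχeq, hχ'eq]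
  · -- χY = 1 on FY
    rintro (⟨x, t⟩ | ⟨x, t⟩) hz
    · rcases hz with ⟨p, hp, hpe⟩ | ⟨p, hp, hpe⟩
      · cases hpe; exact hχF _ hp.1
      · exact absurd hpe (by simp)
    · rcases hz with ⟨p, hp, hpe⟩ | ⟨p, hp, hpe⟩
      · exact absurd hpe (by simp)
      · cases hpe; exact hχ'F _ hp.1
  · -- the integral identity
    intro f
    have hcm : Measurable c := measurable_of_countable c
    set g : Y → ℝ := fun y => c (fun j => χY (ρY y (f j))) with hg
    have hGmeas : Measurable fun x : X => c (fun j => χ (ρ x (f j))) :=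
      hcm.comp (measurable_pi_lambda _ fun j => hχmeas.comp (hρmeas (f j)))
    have hG'meas : Measurable fun x : X' => c (fun j => χ' (ρ' x (f j))) :=
      hcm.comp (measurable_pi_lambda _ fun j => hχ'meas.comp (hρ'meas (f j)))
    have hgmeas : Measurable g := by
      apply Measurable.sumElim
      · exact hGmeas.comp measurable_fst
      · exact hG'meas.comp measurable_fst
    have h1 : ∫ y in FY, g y ∂((μ.prod ν).map Sum.inl)
        = (ν Set.univ).toReal * ∫ x in F, c (fun j => χ (ρ x (f j))) ∂μ := by
      rw [hinl.setIntegral_map g FY, hFYl]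
      exact stmt12_aux μ ν hFmeas hFfin _ hGmeas C (fun x => hc _)
    have h2 : ∫ y in FY, g y ∂((μ'.prod ν').map Sum.inr)
        = (ν' Set.univ).toReal * ∫ x in F', c (fun j => χ' (ρ' x (f j))) ∂μ' := by
      rw [hinr.setIntegral_map g FY, hFYr]
      exact stmt12_aux μ' ν' hF'meas hF'fin _ hG'meas C (fun x => hc _)
    have hi1 : Integrable g (((μ.prod ν).map Sum.inl).restrict FY) := by
      rw [hinl.restrict_map, hFYl, stmt12_restrict_prod μ ν hFmeas, hinl.integrable_map_iff]
      haveI : IsFiniteMeasure (μ.restrict F) := ⟨by rwa [Measure.restrict_apply_univ]⟩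
      refine Integrable.mono' (integrable_const C) (hgmeas.comp measurable_inl).aestronglyMeasurable
        (Filter.Eventually.of_forall fun p => by simpa [g] using hc _)
    have hi2 : Integrable g (((μ'.prod ν').map Sum.inr).restrict FY) := by
      rw [hinr.restrict_map, hFYr, stmt12_restrict_prod μ' ν' hF'meas, hinr.integrable_map_iff]
      haveI : IsFiniteMeasure (μ'.restrict F') := ⟨by rwa [Measure.restrict_apply_univ]⟩
      refine Integrable.mono' (integrable_const C) (hgmeas.comp measurable_inr).aestronglyMeasurable
        (Filter.Eventually.of_forall fun p => by simpa [g] using hc _)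
    calc ∫ y in FY, g y ∂μY
        = ∫ y in FY, g y ∂((μ.prod ν).map Sum.inl)
          + ∫ y in FY, g y ∂((μ'.prod ν').map Sum.inr) := by
          simp only [μY, Measure.restrict_add]
          exact integral_add_measure hi1 hi2
      _ = _ := by rw [h1, h2]
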